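/- Let μ be the Haar probability measure on the compact group SU(2) of 2×2 special unitary matrices, and define the G-twirling map on 8×8 complex matrices by G(ρ) := ∫_{SU(2)} (U ⊗ U ⊗ U) ρ (U ⊗ U ⊗ U)† dμ(U), where ⊗ is the Kronecker product. Then for every V ∈ SU(2) and every 8×8 complex matrix ρ, G((V ⊗ V ⊗ I₂) ρ (V ⊗ V ⊗ I₂)†) = G((I₂ ⊗ I₂ ⊗ V†) ρ (I₂ ⊗ I₂ ⊗ V)). That is, a rigid rotation of the first two tensor factors (the quantum reference frame) is equivalent under G-twirling to the inverse rotation applied to the third factor (the system). -/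

import Mathlib

open Matrix Kronecker MeasureTheory

/-- The compact group SU(2) of 2×2 special unitary complex matrices. -/
abbrev SU2 : Type := Matrix.specialUnitaryGroup (Fin 2) ℂ

noncomputable instance : MeasurableSpace SU2 := borel SU2

instance : BorelSpace SU2 := ⟨rfl⟩

/-- The underlying 2×2 matrix of an element of SU(2). -/
def suMat (U : SU2) : Matrix (Fin 2) (Fin 2) ℂ := (U : Matrix (Fin 2) (Fin 2) ℂ)

/-- The index type of `(ℂ²)^{⊗3} ≅ ℂ⁸`. -/
abbrev Q3 : Type := Fin 2 × Fin 2 × Fin 2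

/-- The 2×2 identity matrix. -/
def I2 : Matrix (Fin 2) (Fin 2) ℂ := 1

/-- `A ⊗ B ⊗ C` as an 8×8 matrix (Kronecker product). -/
def kron3 (A B C : Matrix (Fin 2) (Fin 2) ℂ) : Matrix Q3 Q3 ℂ :=
  A ⊗ₖ (B ⊗ₖ C)

/-- The G-twirling map: averaging with respect to a measure `μ` on `SU(2)`,
`G(ρ) := ∫ (U ⊗ U ⊗ U) ρ (U ⊗ U ⊗ U)† dμ(U)` (defined entrywise). -/
noncomputable def Gtwirl (μ : Measure SU2) (ρ : Matrix Q3 Q3 ℂ) : Matrix Q3 Q3 ℂ :=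
  Matrix.of fun i j =>
    ∫ U : SU2, (kron3 (suMat U) (suMat U) (suMat U) * ρ *
      (kron3 (suMat U) (suMat U) (suMat U))ᴴ) i j ∂μ

/-! ### Auxiliary material -/

section Aux

lemma suMat_mem_unitary (U : SU2) : suMat U ∈ Matrix.unitaryGroup (Fin 2) ℂ :=
  (Matrix.mem_specialUnitaryGroup_iff.mp U.2).1

lemma suMat_det (U : SU2) : (suMat U).det = 1 :=
  (Matrix.mem_specialUnitaryGroup_iff.mp U.2).2

lemma suMat_mul_conjTranspose (U : SU2) : suMat U * (suMat U)ᴴ = 1 := by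
  have h := (suMat_mem_unitary U).2
  simpa [Matrix.star_eq_conjTranspose] using h

lemma conjTranspose_mul_suMat (U : SU2) : (suMat U)ᴴ * suMat U = 1 := by
  have h := (suMat_mem_unitary U).1
  simpa [Matrix.star_eq_conjTranspose] using h

noncomputable instance : Group SU2 :=
  { (inferInstance : Monoid SU2) with
    inv := fun U => ⟨star U.1, by
      refine Matrix.mem_specialUnitaryGroup_iff.mpr ⟨Unitary.star_mem (suMat_mem_unitary U), ?_⟩
      have h := suMat_det U
      simp [Matrix.star_eq_conjTranspose, Matrix.det_conjTranspose, suMat] at h ⊢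
      simp [h]⟩
    inv_mul_cancel := fun U => Subtype.ext (by
      simpa [Matrix.star_eq_conjTranspose, suMat] using conjTranspose_mul_suMat U) }

lemma continuous_suMat : Continuous suMat := continuous_subtype_val

instance : IsTopologicalGroup SU2 where
  continuous_mul := by
    rw [continuous_induced_rng]
    exact (continuous_subtype_val.comp continuous_fst).mul
      (continuous_subtype_val.comp continuous_snd)
  continuous_inv := by
    rw [continuous_induced_rng]
    exact continuous_subtype_val.star

instance : CompactSpace SU2 := by
  have hsub : (Matrix.specialUnitaryGroup (Fin 2) ℂ : Set (Matrix (Fin 2) (Fin 2) ℂ)) ⊆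
      Set.pi Set.univ (fun _ : Fin 2 => Set.pi Set.univ
        (fun _ : Fin 2 => Metric.closedBall (0 : ℂ) 1)) := by
    intro A hA
    have hAu : A ∈ Matrix.unitaryGroup (Fin 2) ℂ :=
      (Matrix.mem_specialUnitaryGroup_iff.mp hA).1
    intro i _ j _
    simpa [mem_closedBall_zero_iff] using entry_norm_bound_of_unitary hAu i j
  have hK : IsCompact (Set.pi Set.univ (fun _ : Fin 2 => Set.pi Set.univ
      (fun _ : Fin 2 => Metric.closedBall (0 : ℂ) 1))) :=
    isCompact_univ_pi fun _ => isCompact_univ_pi fun _ => isCompact_closedBall 0 1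
  have hset : (Matrix.specialUnitaryGroup (Fin 2) ℂ : Set (Matrix (Fin 2) (Fin 2) ℂ)) =
      {A | star A * A = 1} ∩ {A | A * star A = 1} ∩ {A | A.det = 1} := by
    ext A
    simp only [SetLike.mem_coe, Matrix.mem_specialUnitaryGroup_iff, Set.mem_inter_iff,
      Set.mem_setOf_eq]
    constructor
    · rintro ⟨hu, hd⟩; exact ⟨⟨hu.1, hu.2⟩, hd⟩
    · rintro ⟨⟨h1, h2⟩, hd⟩; exact ⟨⟨h1, h2⟩, hd⟩
  have hclosed : IsClosed (Matrix.specialUnitaryGroup (Fin 2) ℂ :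
      Set (Matrix (Fin 2) (Fin 2) ℂ)) := by
    rw [hset]
    exact ((isClosed_eq (continuous_star.mul continuous_id) continuous_const).inter
      (isClosed_eq (continuous_id.mul continuous_star) continuous_const)).inter
      (isClosed_eq (continuous_id.matrix_det) continuous_const)
  have : IsCompact (Matrix.specialUnitaryGroup (Fin 2) ℂ : Set (Matrix (Fin 2) (Fin 2) ℂ)) :=
    hK.of_isClosed_subset hclosed hsub
  exact isCompact_iff_compactSpace.mp this

lemma kron_conjTranspose {m n p q : Type*} (A : Matrix m n ℂ) (B : Matrix p q ℂ) :
    (A ⊗ₖ B)ᴴ = Aᴴ ⊗ₖ Bᴴ := by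
  ext ⟨i, j⟩ ⟨k, l⟩
  simp [Matrix.conjTranspose_apply, mul_comm]

lemma kron3_conjTranspose (A B C : Matrix (Fin 2) (Fin 2) ℂ) :
    (kron3 A B C)ᴴ = kron3 Aᴴ Bᴴ Cᴴ := by
  simp [kron3, kron_conjTranspose]

lemma kron3_key (U V : SU2) (ρ : Matrix Q3 Q3 ℂ) :
    kron3 (suMat U) (suMat U) (suMat U) *
        (kron3 (suMat V) (suMat V) I2 * ρ * (kron3 (suMat V) (suMat V) I2)ᴴ) *
        (kron3 (suMat U) (suMat U) (suMat U))ᴴ =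
      kron3 (suMat (U * V)) (suMat (U * V)) (suMat (U * V)) *
        (kron3 I2 I2 (suMat V)ᴴ * ρ * kron3 I2 I2 (suMat V)) *
        (kron3 (suMat (U * V)) (suMat (U * V)) (suMat (U * V)))ᴴ := by
  have hUV : suMat (U * V) = suMat U * suMat V := rfl
  have hv : suMat V * (suMat V)ᴴ = 1 := suMat_mul_conjTranspose V
  have hvX : ∀ X : Matrix (Fin 2) (Fin 2) ℂ, suMat V * ((suMat V)ᴴ * X) = X := fun X => by
    rw [← mul_assoc, hv, one_mul]
  have h1 : kron3 (suMat U) (suMat U) (suMat U) * kron3 (suMat V) (suMat V) I2 =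
      kron3 (suMat (U * V)) (suMat (U * V)) (suMat (U * V)) * kron3 I2 I2 (suMat V)ᴴ := by
    simp [kron3, I2, hUV, ← Matrix.mul_kronecker_mul, mul_one, one_mul, mul_assoc, hv]
  have h2 : (kron3 (suMat V) (suMat V) I2)ᴴ * (kron3 (suMat U) (suMat U) (suMat U))ᴴ =
      kron3 I2 I2 (suMat V) *
        (kron3 (suMat (U * V)) (suMat (U * V)) (suMat (U * V)))ᴴ := by
    simp [kron3, I2, kron_conjTranspose, hUV, Matrix.conjTranspose_mul,
      ← Matrix.mul_kronecker_mul, Matrix.conjTranspose_one, one_mul, mul_one, mul_assoc, hvX]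
  calc
    kron3 (suMat U) (suMat U) (suMat U) *
        (kron3 (suMat V) (suMat V) I2 * ρ * (kron3 (suMat V) (suMat V) I2)ᴴ) *
        (kron3 (suMat U) (suMat U) (suMat U))ᴴ =
        (kron3 (suMat U) (suMat U) (suMat U) * kron3 (suMat V) (suMat V) I2) * ρ *
          ((kron3 (suMat V) (suMat V) I2)ᴴ * (kron3 (suMat U) (suMat U) (suMat U))ᴴ) := by
      simp only [mul_assoc]
    _ = (kron3 (suMat (U * V)) (suMat (U * V)) (suMat (U * V)) * kron3 I2 I2 (suMat V)ᴴ) * ρ *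
          (kron3 I2 I2 (suMat V) *
            (kron3 (suMat (U * V)) (suMat (U * V)) (suMat (U * V)))ᴴ) := by
      rw [h1, h2]
    _ = _ := by simp only [mul_assoc]

end Aux

/-- For the Haar probability measure on SU(2) (the left-invariant probability
measure), a rigid rotation `V ⊗ V ⊗ I₂` of the two reference-frame factors before
G-twirling is equivalent to applying the inverse rotation `I₂ ⊗ I₂ ⊗ V†` to the
system factor: `G((V ⊗ V ⊗ I₂) ρ (V ⊗ V ⊗ I₂)†) = G((I₂ ⊗ I₂ ⊗ V†) ρ (I₂ ⊗ I₂ ⊗ V))`. -/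
theorem gtwirl_rigid_rotation_eq_inverse_on_system
    (μ : Measure SU2) [IsProbabilityMeasure μ]
    (hHaar : ∀ V : SU2, μ.map (fun U => V * U) = μ)
    (V : SU2) (ρ : Matrix Q3 Q3 ℂ) :
    Gtwirl μ (kron3 (suMat V) (suMat V) I2 * ρ * (kron3 (suMat V) (suMat V) I2)ᴴ) =
      Gtwirl μ (kron3 I2 I2 (suMat V)ᴴ * ρ * kron3 I2 I2 (suMat V)) := by
  haveI : μ.IsMulLeftInvariant := ⟨hHaar⟩
  haveI : Nonempty SU2 := ⟨1⟩
  haveI : μ.IsHaarMeasure :=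
    μ.isHaarMeasure_of_isCompact_nonempty_interior Set.univ isCompact_univ
      (by rw [interior_univ]; exact ⟨1, trivial⟩) (by simp) (by simp)
  have hmR : Measurable (fun U : SU2 => U * V) := (continuous_mul_right V).measurable
  have hright : μ.map (fun U => U * V) = μ := by
    haveI h1 : IsProbabilityMeasure (μ.map (fun U => U * V)) :=
      Measure.isProbabilityMeasure_map hmR.aemeasurable
    haveI h2 : (μ.map (fun U => U * V)).IsMulLeftInvariant := by
      constructor
      intro g
      have hmL : Measurable (fun U : SU2 => g * U) := (continuous_mul_left g).measurable
      rw [Measure.map_map hmL hmR]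
      have hcomp : ((fun U : SU2 => g * U) ∘ fun U => U * V) =
          ((fun U : SU2 => U * V) ∘ fun U => g * U) := by
        funext U; simp [Function.comp, mul_assoc]
      rw [hcomp, ← Measure.map_map hmR hmL, hHaar g]
    haveI h3 : (μ.map (fun U => U * V)).IsHaarMeasure :=
      (μ.map (fun U => U * V)).isHaarMeasure_of_isCompact_nonempty_interior Set.univ
        isCompact_univ (by rw [interior_univ]; exact ⟨1, trivial⟩) (by simp) (by simp)
    exact Measure.isHaarMeasure_eq_of_isProbabilityMeasure _ μ
  let e : SU2 ≃ᵐ SU2 := (Homeomorph.mulRight V).toMeasurableEquiv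
  ext i j
  show (∫ U : SU2, _ ∂μ) = (∫ U : SU2, _ ∂μ)
  have hint : ∀ U : SU2,
      (kron3 (suMat U) (suMat U) (suMat U) *
          (kron3 (suMat V) (suMat V) I2 * ρ * (kron3 (suMat V) (suMat V) I2)ᴴ) *
          (kron3 (suMat U) (suMat U) (suMat U))ᴴ) i j =
        (fun W : SU2 => (kron3 (suMat W) (suMat W) (suMat W) *
          (kron3 I2 I2 (suMat V)ᴴ * ρ * kron3 I2 I2 (suMat V)) *
          (kron3 (suMat W) (suMat W) (suMat W))ᴴ) i j) (U * V) := fun U =>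
    congrArg (fun M : Matrix Q3 Q3 ℂ => M i j) (kron3_key U V ρ)
  calc
    (∫ U : SU2, (kron3 (suMat U) (suMat U) (suMat U) *
        (kron3 (suMat V) (suMat V) I2 * ρ * (kron3 (suMat V) (suMat V) I2)ᴴ) *
        (kron3 (suMat U) (suMat U) (suMat U))ᴴ) i j ∂μ) =
      ∫ U : SU2, (fun W : SU2 => (kron3 (suMat W) (suMat W) (suMat W) *
        (kron3 I2 I2 (suMat V)ᴴ * ρ * kron3 I2 I2 (suMat V)) *
        (kron3 (suMat W) (suMat W) (suMat W))ᴴ) i j) (e U) ∂μ := by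
      refine integral_congr_ae (Filter.Eventually.of_forall fun U => ?_)
      exact hint U
    _ = ∫ W : SU2, (kron3 (suMat W) (suMat W) (suMat W) *
        (kron3 I2 I2 (suMat V)ᴴ * ρ * kron3 I2 I2 (suMat V)) *
        (kron3 (suMat W) (suMat W) (suMat W))ᴴ) i j ∂(μ.map e) :=
      (integral_map_equiv (μ := μ) e (fun W : SU2 => (kron3 (suMat W) (suMat W) (suMat W) *
        (kron3 I2 I2 (suMat V)ᴴ * ρ * kron3 I2 I2 (suMat V)) *
        (kron3 (suMat W) (suMat W) (suMat W))ᴴ) i j)).symm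
    _ = _ := by
      have : μ.map e = μ := hright
      rw [this]
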